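/- Let n ≥ 4 and L > 2n be integers, and let S ⊆ Λ_L satisfy |S| = n² and e(S) = 2n(n−1). Then S = x + {0,…,n−1}² for some x ∈ Λ_L; that is, the only configurations with n² particles achieving the minimal energy −2n(n−1) are the square configurations η^x. -/

import Mathlib

open scoped Classical

noncomputable section

/-- A site of the discrete torus `Λ_L`. -/
abbrev Site (L : ℕ) := ZMod L × ZMod L

/-- Two sites of the discrete torus are adjacent if their difference is a unit vector. -/
def torusAdj (L : ℕ) (u v : Site L) : Prop :=
  u - v = (1, 0) ∨ u - v = (-1, 0) ∨ u - v = (0, 1) ∨ u - v = (0, -1)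

/-- `e(S)`: the number of unordered pairs of adjacent sites contained in `S`. -/
def torusE (L : ℕ) (S : Finset (Site L)) : ℕ :=
  ((S ×ˢ S).filter fun p => torusAdj L p.1 p.2).card / 2

/-- The occupied set `Q_x = x + {0,…,n−1}²` of the square configuration `η^x`. -/
def squareSet (L n : ℕ) (x : Site L) : Finset (Site L) :=
  (Finset.range n ×ˢ Finset.range n).image fun p => x + ((p.1 : ZMod L), (p.2 : ZMod L))

namespace MinE

variable {L : ℕ}

/-- number of `t ∈ T` with `t+1 ∈ T`. -/
def dcount (T : Finset (ZMod L)) : ℕ := (T.filter fun t => t + 1 ∈ T).card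

def colSet (S : Finset (Site L)) (j : ZMod L) : Finset (ZMod L) :=
  (S.filter fun u => u.1 = j).image Prod.snd

def vcount (S : Finset (Site L)) : ℕ :=
  (S.filter fun u => u + ((0 : ZMod L), (1 : ZMod L)) ∈ S).card

def hcount (S : Finset (Site L)) : ℕ :=
  (S.filter fun u => u + ((1 : ZMod L), (0 : ZMod L)) ∈ S).card

lemma mem_colSet {S : Finset (Site L)} {j i : ZMod L} :
    i ∈ colSet S j ↔ (j, i) ∈ S := by
  simp only [colSet, Finset.mem_image, Finset.mem_filter]
  constructor
  · rintro ⟨u, ⟨hu, h1⟩, h2⟩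
    subst h1; subst h2; simpa using hu
  · intro h; exact ⟨(j, i), ⟨h, rfl⟩, rfl⟩

lemma colSet_card (S : Finset (Site L)) (j : ZMod L) :
    (colSet S j).card = (S.filter fun u => u.1 = j).card := by
  apply Finset.card_image_of_injOn
  intro u hu v hv h
  simp only [Finset.mem_coe, Finset.mem_filter] at hu hv
  exact Prod.ext (hu.2.trans hv.2.symm) h

lemma sum_colSet_card [NeZero L] (S : Finset (Site L)) :
    ∑ j : ZMod L, (colSet S j).card = S.card := by
  simp_rw [colSet_card]
  exact (Finset.card_eq_sum_card_fiberwise (f := Prod.fst) (t := Finset.univ)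
    (fun x _ => Finset.mem_univ _)).symm

lemma vcount_eq [NeZero L] (S : Finset (Site L)) :
    vcount S = ∑ j : ZMod L, dcount (colSet S j) := by
  rw [vcount, Finset.card_eq_sum_card_fiberwise (f := Prod.fst) (t := Finset.univ)
    (fun x _ => Finset.mem_univ _)]
  refine Finset.sum_congr rfl fun j _ => ?_
  apply Finset.card_bij (fun u _ => u.2)
  · intro u hu
    simp only [Finset.mem_filter] at hu
    obtain ⟨⟨hu1, hu2⟩, hu3⟩ := hu
    have hadd : u + ((0 : ZMod L), (1 : ZMod L)) = (u.1, u.2 + 1) := by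
      ext <;> simp
    rw [hadd] at hu2
    simp only [dcount, Finset.mem_filter, mem_colSet]
    subst hu3
    exact ⟨by simpa using hu1, by simpa using hu2⟩
  · intro u hu v hv h
    simp only [Finset.mem_filter] at hu hv
    exact Prod.ext (hu.2.trans hv.2.symm) h
  · intro t ht
    simp only [dcount, Finset.mem_filter, mem_colSet] at ht
    refine ⟨(j, t), ?_, rfl⟩
    have hadd : (j, t) + ((0 : ZMod L), (1 : ZMod L)) = (j, t + 1) := by
      ext <;> simp
    exact Finset.mem_filter.mpr ⟨Finset.mem_filter.mpr ⟨ht.1, by rw [hadd]; exact ht.2⟩, rfl⟩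

lemma dcount_le (T : Finset (ZMod L)) : dcount T ≤ T.card :=
  Finset.card_filter_le _ _

lemma exists_boundary [NeZero L] {T : Finset (ZMod L)} (h1 : T.Nonempty)
    (h2 : T ≠ Finset.univ) : ∃ t ∈ T, t + 1 ∉ T := by
  by_contra h
  push_neg at h
  apply h2
  obtain ⟨a, ha⟩ := h1
  have key : ∀ k : ℕ, a + (k : ZMod L) ∈ T := by
    intro k
    induction k with
    | zero => simpa using ha
    | succ m ih =>
      have := h _ ih
      have he : a + ((m + 1 : ℕ) : ZMod L) = a + (m : ZMod L) + 1 := by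
        push_cast; ring
      rwa [he]
  apply Finset.eq_univ_of_forall
  intro x
  have := key (x - a).val
  rwa [ZMod.natCast_zmod_val, add_sub_cancel] at this

lemma dcount_succ_le [NeZero L] {T : Finset (ZMod L)} (h1 : T.Nonempty)
    (h2 : T ≠ Finset.univ) : dcount T + 1 ≤ T.card := by
  obtain ⟨t, ht, ht'⟩ := exists_boundary h1 h2
  have hsub : T.filter (fun s => s + 1 ∈ T) ⊆ T.erase t := by
    intro x hx
    simp only [Finset.mem_filter] at hx
    exact Finset.mem_erase.mpr ⟨fun h => ht' (h ▸ hx.2), hx.1⟩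
  have := Finset.card_le_card hsub
  have hc := Finset.card_erase_of_mem ht
  have hpos : 1 ≤ T.card := Finset.card_pos.mpr ⟨t, ht⟩
  unfold dcount
  omega

lemma interval_of_dcount [NeZero L] {T : Finset (ZMod L)} (_h1 : T.Nonempty)
    (h3 : dcount T + 1 = T.card) :
    ∃ b : ZMod L, T = (Finset.range T.card).image fun k : ℕ => b - (k : ZMod L) := by
  have hsplit := Finset.card_filter_add_card_filter_not
    (s := T) (p := fun t => t + 1 ∈ T)
  have hB : (T.filter fun t => ¬ (t + 1 ∈ T)).card = 1 := by
    unfold dcount at h3; omega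
  obtain ⟨b, hb⟩ := Finset.card_eq_one.mp hB
  have hbT : b ∈ T := by
    have : b ∈ T.filter fun t => ¬ (t + 1 ∈ T) := hb ▸ Finset.mem_singleton_self b
    exact (Finset.mem_filter.mp this).1
  have step : ∀ t ∈ T, t ≠ b → t + 1 ∈ T := by
    intro t ht hne
    by_contra h
    have : t ∈ T.filter fun s => ¬ (s + 1 ∈ T) := Finset.mem_filter.mpr ⟨ht, h⟩
    rw [hb] at this
    exact hne (Finset.mem_singleton.mp this)
  have claimA : ∀ (j : ℕ), ∀ t ∈ T, j ≤ (b - t).val → t + (j : ZMod L) ∈ T := by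
    intro j
    induction j with
    | zero => intro t ht _; simpa using ht
    | succ m ih =>
      intro t ht hm
      have h1' : t + (m : ZMod L) ∈ T := ih t ht (by omega)
      have hne : t + (m : ZMod L) ≠ b := by
        intro he
        have hbt : b - t = (m : ZMod L) := by rw [← he]; ring
        have hv : (b - t).val = m := by
          rw [hbt, ZMod.val_cast_of_lt]
          exact lt_of_lt_of_le (by omega) (le_of_lt (ZMod.val_lt (b - t)))
        omega
      have := step _ h1' hne
      have he : t + ((m + 1 : ℕ) : ZMod L) = t + (m : ZMod L) + 1 := by push_cast; ring
      rwa [he]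
  set K := T.image (fun t => (b - t).val) with hKdef
  have hKcard : K.card = T.card := Finset.card_image_of_injOn (by
    intro t ht s hs h
    have : b - t = b - s := ZMod.val_injective L h
    exact sub_right_injective this)
  have hdc : ∀ k ∈ K, ∀ k', k' ≤ k → k' ∈ K := by
    intro k hk k' hk'
    obtain ⟨t, ht, rfl⟩ := Finset.mem_image.mp hk
    have hj : (b - t).val - k' ≤ (b - t).val := Nat.sub_le _ _
    have hmem := claimA ((b - t).val - k') t ht hj
    refine Finset.mem_image.mpr ⟨t + (((b - t).val - k' : ℕ) : ZMod L), hmem, ?_⟩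
    have hcast : (((b - t).val - k' : ℕ) : ZMod L) = (b - t) - (k' : ZMod L) := by
      rw [Nat.cast_sub hk', ZMod.natCast_zmod_val]
    have heq : b - (t + (((b - t).val - k' : ℕ) : ZMod L)) = ((k' : ℕ) : ZMod L) := by
      rw [hcast]; ring
    rw [heq, ZMod.val_cast_of_lt]
    exact lt_of_le_of_lt hk' (ZMod.val_lt (b - t))
  have hbound : ∀ k ∈ K, k < T.card := by
    intro k hk
    have hsub : Finset.range (k + 1) ⊆ K := fun k' hk' =>
      hdc k hk k' (Nat.lt_succ_iff.mp (Finset.mem_range.mp hk'))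
    have := Finset.card_le_card hsub
    rw [Finset.card_range, hKcard] at this
    omega
  refine ⟨b, Finset.eq_of_subset_of_card_le ?_ ?_⟩
  · intro t ht
    have hk : (b - t).val ∈ Finset.range T.card :=
      Finset.mem_range.mpr (hbound _ (Finset.mem_image.mpr ⟨t, ht, rfl⟩))
    refine Finset.mem_image.mpr ⟨(b - t).val, hk, ?_⟩
    rw [ZMod.natCast_zmod_val]
    ring
  · calc ((Finset.range T.card).image fun k : ℕ => b - (k : ZMod L)).card
        ≤ (Finset.range T.card).card := Finset.card_image_le
      _ = T.card := Finset.card_range _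

lemma colSet_prod {A B : Finset (ZMod L)} {j : ZMod L} (hj : j ∈ A) :
    colSet (A ×ˢ B) j = B := by
  ext i
  rw [mem_colSet, Finset.mem_product]
  simp [hj]

lemma vcount_prod (A B : Finset (ZMod L)) :
    vcount (A ×ˢ B) = A.card * dcount B := by
  rw [vcount, dcount]
  have h : (A ×ˢ B).filter (fun u => u + ((0 : ZMod L), (1 : ZMod L)) ∈ A ×ˢ B)
      = A ×ˢ (B.filter fun t => t + 1 ∈ B) := by
    ext ⟨a, t⟩
    simp only [Finset.mem_filter, Finset.mem_product, Prod.fst_add, Prod.snd_add,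
      add_zero]
    tauto
  rw [h, Finset.card_product]

lemma hcount_prod (A B : Finset (ZMod L)) :
    hcount (A ×ˢ B) = dcount A * B.card := by
  rw [hcount, dcount]
  have h : (A ×ˢ B).filter (fun u => u + ((1 : ZMod L), (0 : ZMod L)) ∈ A ×ˢ B)
      = (A.filter fun t => t + 1 ∈ A) ×ˢ B := by
    ext ⟨a, t⟩
    simp only [Finset.mem_filter, Finset.mem_product, Prod.fst_add, Prod.snd_add,
      add_zero]
    tauto
  rw [h, Finset.card_product]

lemma F_subset_C [NeZero L] (S : Finset (Site L)) :
    (Finset.univ.filter fun j => (colSet S j).card = L) ⊆ S.image Prod.fst := by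
  intro j hj
  have hcard : (colSet S j).card = L := (Finset.mem_filter.mp hj).2
  have hne : (colSet S j).Nonempty := Finset.card_pos.mp (by
    rw [hcard]; exact Nat.pos_of_ne_zero (NeZero.ne L))
  obtain ⟨i, hi⟩ := hne
  exact Finset.mem_image.mpr ⟨(j, i), mem_colSet.mp hi, rfl⟩

lemma colSet_empty_of_not_mem {S : Finset (Site L)} {j : ZMod L}
    (hj : j ∉ S.image Prod.fst) : colSet S j = ∅ := by
  rw [Finset.eq_empty_iff_forall_notMem]
  intro i hi
  exact hj (Finset.mem_image.mpr ⟨(j, i), mem_colSet.mp hi, rfl⟩)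

lemma key_ineq [NeZero L] (S : Finset (Site L)) :
    vcount S + (S.image Prod.fst).card ≤
      S.card + (Finset.univ.filter fun j => (colSet S j).card = L).card := by
  set C := S.image Prod.fst with hCdef
  set F := Finset.univ.filter (fun j => (colSet S j).card = L) with hFdef
  have hFC : F ⊆ C := F_subset_C S
  have h1 : vcount S = ∑ j ∈ C, dcount (colSet S j) := by
    rw [vcount_eq]
    symm
    apply Finset.sum_subset (Finset.subset_univ _)
    intro j _ hj
    rw [colSet_empty_of_not_mem hj]
    simp [dcount]
  have h2 : ∑ j ∈ C, (colSet S j).card = S.card := by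
    rw [← sum_colSet_card S]
    apply Finset.sum_subset (Finset.subset_univ _)
    intro j _ hj
    rw [colSet_empty_of_not_mem hj]
    simp
  have h3 : ∀ j ∈ C, dcount (colSet S j) + 1 ≤
      (colSet S j).card + (if (colSet S j).card = L then 1 else 0) := by
    intro j hj
    by_cases hfull : (colSet S j).card = L
    · have := dcount_le (colSet S j)
      simp only [hfull, if_pos]
      omega
    · simp only [hfull, if_neg, not_false_iff, add_zero]
      apply dcount_succ_le
      · obtain ⟨u, hu, hu1⟩ := Finset.mem_image.mp hj
        exact ⟨u.2, mem_colSet.mpr (by rwa [← hu1, Prod.mk.eta])⟩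
      · intro h
        apply hfull
        rw [h, Finset.card_univ, ZMod.card]
  have hCF : C.filter (fun j => (colSet S j).card = L) = F := by
    ext j
    simp only [Finset.mem_filter, hFdef, Finset.mem_univ, true_and]
    exact ⟨fun h => h.2, fun h => ⟨hFC (by simp [hFdef, h]), h⟩⟩
  calc vcount S + C.card = ∑ j ∈ C, (dcount (colSet S j) + 1) := by
        rw [h1, Finset.sum_add_distrib, Finset.sum_const, smul_eq_mul, mul_one]
    _ ≤ ∑ j ∈ C, ((colSet S j).card + (if (colSet S j).card = L then 1 else 0)) :=
        Finset.sum_le_sum h3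
    _ = S.card + F.card := by
        rw [Finset.sum_add_distrib, h2, ← Finset.card_filter, hCF]

lemma full_mul_le [NeZero L] (S : Finset (Site L)) :
    (Finset.univ.filter fun j => (colSet S j).card = L).card * L ≤ S.card := by
  set F := Finset.univ.filter (fun j => (colSet S j).card = L) with hFdef
  have h1 : ∑ j ∈ F, (colSet S j).card = F.card * L := by
    rw [Finset.sum_congr rfl (fun j hj => (Finset.mem_filter.mp hj).2),
      Finset.sum_const, smul_eq_mul]
  calc F.card * L = ∑ j ∈ F, (colSet S j).card := h1.symm
    _ ≤ ∑ j : ZMod L, (colSet S j).card :=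
        Finset.sum_le_sum_of_subset (Finset.subset_univ _)
    _ = S.card := sum_colSet_card S

lemma full_col_rows [NeZero L] {S : Finset (Site L)} {j : ZMod L}
    (hj : (colSet S j).card = L) : S.image Prod.snd = Finset.univ := by
  have huniv : colSet S j = Finset.univ :=
    Finset.eq_univ_of_card _ (by rw [hj, ZMod.card])
  apply Finset.eq_univ_of_forall
  intro i
  exact Finset.mem_image.mpr ⟨(j, i), mem_colSet.mp (huniv ▸ Finset.mem_univ i), rfl⟩

lemma mem_swap {S : Finset (Site L)} {v : Site L} :
    v ∈ S.image Prod.swap ↔ v.swap ∈ S := by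
  simp only [Finset.mem_image]
  constructor
  · rintro ⟨u, hu, rfl⟩; simpa using hu
  · intro h; exact ⟨v.swap, h, by simp⟩

lemma hcount_swap (S : Finset (Site L)) : hcount S = vcount (S.image Prod.swap) := by
  rw [hcount, vcount]
  refine Finset.card_bij' (fun u _ => u.swap) (fun u _ => u.swap) ?_ ?_ ?_ ?_
  · intro u hu
    rw [Finset.mem_filter] at hu
    rw [Finset.mem_filter]
    refine ⟨mem_swap.mpr (by simpa using hu.1), ?_⟩
    have he : u.swap + ((0 : ZMod L), (1 : ZMod L)) = (u + ((1:ZMod L),(0:ZMod L))).swap := by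
      ext <;> simp
    rw [he, mem_swap]
    simpa using hu.2
  · intro u hu
    rw [Finset.mem_filter] at hu
    rw [Finset.mem_filter]
    refine ⟨mem_swap.mp hu.1, ?_⟩
    have he : u.swap + ((1 : ZMod L), (0 : ZMod L)) = (u + ((0:ZMod L),(1:ZMod L))).swap := by
      ext <;> simp
    rw [he]
    exact mem_swap.mp hu.2
  · intro u _; simp
  · intro u _; simp

lemma image_fst_swap (S : Finset (Site L)) :
    (S.image Prod.swap).image Prod.fst = S.image Prod.snd := by
  rw [Finset.image_image]; rfl

lemma image_snd_swap (S : Finset (Site L)) :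
    (S.image Prod.swap).image Prod.snd = S.image Prod.fst := by
  rw [Finset.image_image]; rfl

lemma torusE_eq (hL3 : 3 ≤ L) (S : Finset (Site L)) :
    torusE L S = hcount S + vcount S := by
  haveI : NeZero L := ⟨by omega⟩
  haveI : Fact (1 < L) := ⟨by omega⟩
  have h1 : (1 : ZMod L) ≠ 0 := one_ne_zero
  have h2 : (2 : ZMod L) ≠ 0 := by
    intro h
    have : ((2 : ℕ) : ZMod L) = 0 := by exact_mod_cast h
    have := (ZMod.natCast_eq_zero_iff 2 L).mp this
    have := Nat.le_of_dvd (by norm_num) this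
    omega
  have hne12 : ((1 : ZMod L), (0 : ZMod L)) ≠ ((-1 : ZMod L), (0 : ZMod L)) := by
    intro h
    apply h2
    have := congrArg Prod.fst h
    simp only at this
    linear_combination this
  have hne34 : ((0 : ZMod L), (1 : ZMod L)) ≠ ((0 : ZMod L), (-1 : ZMod L)) := by
    intro h
    apply h2
    have := congrArg Prod.snd h
    simp only at this
    linear_combination this
  have hne13 : ∀ y : ZMod L, ((1 : ZMod L), (0 : ZMod L)) ≠ ((0 : ZMod L), y) := by
    intro y h
    exact h1 (congrArg Prod.fst h)
  have hne23 : ∀ y : ZMod L, ((-1 : ZMod L), (0 : ZMod L)) ≠ ((0 : ZMod L), y) := by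
    intro y h
    apply h1
    have := congrArg Prod.fst h
    simp only at this
    linear_combination -this
  set P1 := (S ×ˢ S).filter (fun p : Site L × Site L => p.1 - p.2 = (1, 0)) with hP1
  set P2 := (S ×ˢ S).filter (fun p : Site L × Site L => p.1 - p.2 = (-1, 0)) with hP2
  set P3 := (S ×ˢ S).filter (fun p : Site L × Site L => p.1 - p.2 = (0, 1)) with hP3
  set P4 := (S ×ˢ S).filter (fun p : Site L × Site L => p.1 - p.2 = (0, -1)) with hP4
  have hsplit : (S ×ˢ S).filter (fun p => torusAdj L p.1 p.2) = (P1 ∪ P2) ∪ (P3 ∪ P4) := by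
    ext p
    rw [Finset.mem_filter]
    simp only [hP1, hP2, hP3, hP4, Finset.mem_filter, Finset.mem_union, torusAdj]
    tauto
  have d12 : Disjoint P1 P2 := by
    rw [Finset.disjoint_left]
    intro p hp hq
    exact hne12 ((Finset.mem_filter.mp hp).2.symm.trans (Finset.mem_filter.mp hq).2)
  have d34 : Disjoint P3 P4 := by
    rw [Finset.disjoint_left]
    intro p hp hq
    exact hne34 ((Finset.mem_filter.mp hp).2.symm.trans (Finset.mem_filter.mp hq).2)
  have d1234 : Disjoint (P1 ∪ P2) (P3 ∪ P4) := by
    rw [Finset.disjoint_left]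
    intro p hp hq
    rw [Finset.mem_union] at hp hq
    rcases hp with hp | hp <;> rcases hq with hq | hq
    · exact hne13 _ ((Finset.mem_filter.mp hp).2.symm.trans (Finset.mem_filter.mp hq).2)
    · exact hne13 _ ((Finset.mem_filter.mp hp).2.symm.trans (Finset.mem_filter.mp hq).2)
    · exact hne23 _ ((Finset.mem_filter.mp hp).2.symm.trans (Finset.mem_filter.mp hq).2)
    · exact hne23 _ ((Finset.mem_filter.mp hp).2.symm.trans (Finset.mem_filter.mp hq).2)
  have hcard : ((S ×ˢ S).filter (fun p => torusAdj L p.1 p.2)).card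
      = P1.card + P2.card + P3.card + P4.card := by
    rw [hsplit, Finset.card_union_of_disjoint d1234, Finset.card_union_of_disjoint d12,
      Finset.card_union_of_disjoint d34]
    ring
  have hc1 : P1.card = hcount S := by
    rw [hcount]
    refine Finset.card_bij' (fun p _ => p.2) (fun u _ => (u + ((1:ZMod L),(0:ZMod L)), u)) ?_ ?_ ?_ ?_
    · intro p hp
      simp only [hP1, Finset.mem_filter, Finset.mem_product] at hp
      obtain ⟨⟨hp1, hp2⟩, hp3⟩ := hp
      have : p.1 = p.2 + ((1:ZMod L),(0:ZMod L)) := by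
        rw [← hp3]; ring
      simp only [Finset.mem_filter]
      exact ⟨hp2, this ▸ hp1⟩
    · intro u hu
      simp only [Finset.mem_filter] at hu
      simp only [hP1, Finset.mem_filter, Finset.mem_product]
      exact ⟨⟨hu.2, hu.1⟩, by ring⟩
    · intro p hp
      simp only [hP1, Finset.mem_filter, Finset.mem_product] at hp
      obtain ⟨⟨hp1, hp2⟩, hp3⟩ := hp
      have : p.1 = p.2 + ((1:ZMod L),(0:ZMod L)) := by rw [← hp3]; ring
      exact Prod.ext this.symm rfl
    · intro u _; rfl
  have hc2 : P2.card = hcount S := by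
    rw [hcount]
    refine Finset.card_bij' (fun p _ => p.1) (fun u _ => (u, u + ((1:ZMod L),(0:ZMod L)))) ?_ ?_ ?_ ?_
    · intro p hp
      simp only [hP2, Finset.mem_filter, Finset.mem_product] at hp
      obtain ⟨⟨hp1, hp2⟩, hp3⟩ := hp
      have : p.2 = p.1 + ((1:ZMod L),(0:ZMod L)) := by
        have : p.2 - p.1 = ((1:ZMod L),(0:ZMod L)) := by
          rw [show p.2 - p.1 = -(p.1 - p.2) by ring, hp3]
          ext <;> simp
        rw [← this]; ring
      simp only [Finset.mem_filter]
      exact ⟨hp1, this ▸ hp2⟩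
    · intro u hu
      simp only [Finset.mem_filter] at hu
      simp only [hP2, Finset.mem_filter, Finset.mem_product]
      refine ⟨⟨hu.1, hu.2⟩, ?_⟩
      ext <;> simp
    · intro p hp
      simp only [hP2, Finset.mem_filter, Finset.mem_product] at hp
      obtain ⟨⟨hp1, hp2⟩, hp3⟩ := hp
      have : p.2 = p.1 + ((1:ZMod L),(0:ZMod L)) := by
        have h4 : p.2 - p.1 = ((1:ZMod L),(0:ZMod L)) := by
          rw [show p.2 - p.1 = -(p.1 - p.2) by ring, hp3]
          ext <;> simp
        rw [← h4]; ring
      exact Prod.ext rfl this.symm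
    · intro u _; rfl
  have hc3 : P3.card = vcount S := by
    rw [vcount]
    refine Finset.card_bij' (fun p _ => p.2) (fun u _ => (u + ((0:ZMod L),(1:ZMod L)), u)) ?_ ?_ ?_ ?_
    · intro p hp
      simp only [hP3, Finset.mem_filter, Finset.mem_product] at hp
      obtain ⟨⟨hp1, hp2⟩, hp3⟩ := hp
      have : p.1 = p.2 + ((0:ZMod L),(1:ZMod L)) := by rw [← hp3]; ring
      simp only [Finset.mem_filter]
      exact ⟨hp2, this ▸ hp1⟩
    · intro u hu
      simp only [Finset.mem_filter] at hu
      simp only [hP3, Finset.mem_filter, Finset.mem_product]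
      exact ⟨⟨hu.2, hu.1⟩, by ring⟩
    · intro p hp
      simp only [hP3, Finset.mem_filter, Finset.mem_product] at hp
      obtain ⟨⟨hp1, hp2⟩, hp3⟩ := hp
      have : p.1 = p.2 + ((0:ZMod L),(1:ZMod L)) := by rw [← hp3]; ring
      exact Prod.ext this.symm rfl
    · intro u _; rfl
  have hc4 : P4.card = vcount S := by
    rw [vcount]
    refine Finset.card_bij' (fun p _ => p.1) (fun u _ => (u, u + ((0:ZMod L),(1:ZMod L)))) ?_ ?_ ?_ ?_
    · intro p hp
      simp only [hP4, Finset.mem_filter, Finset.mem_product] at hp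
      obtain ⟨⟨hp1, hp2⟩, hp3⟩ := hp
      have : p.2 = p.1 + ((0:ZMod L),(1:ZMod L)) := by
        have h4 : p.2 - p.1 = ((0:ZMod L),(1:ZMod L)) := by
          rw [show p.2 - p.1 = -(p.1 - p.2) by ring, hp3]
          ext <;> simp
        rw [← h4]; ring
      simp only [Finset.mem_filter]
      exact ⟨hp1, this ▸ hp2⟩
    · intro u hu
      simp only [Finset.mem_filter] at hu
      simp only [hP4, Finset.mem_filter, Finset.mem_product]
      refine ⟨⟨hu.1, hu.2⟩, ?_⟩
      ext <;> simp
    · intro p hp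
      simp only [hP4, Finset.mem_filter, Finset.mem_product] at hp
      obtain ⟨⟨hp1, hp2⟩, hp3⟩ := hp
      have : p.2 = p.1 + ((0:ZMod L),(1:ZMod L)) := by
        have h4 : p.2 - p.1 = ((0:ZMod L),(1:ZMod L)) := by
          rw [show p.2 - p.1 = -(p.1 - p.2) by ring, hp3]
          ext <;> simp
        rw [← h4]; ring
      exact Prod.ext rfl this.symm
    · intro u _; rfl
  rw [torusE, hcard, hc1, hc2, hc3, hc4]
  omega

lemma amgm {n a r : ℕ} (hn : 1 ≤ n) (h10 : n ^ 2 ≤ a * r) (hs : a + r ≤ 2 * n) :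
    a = n ∧ r = n := by
  have h10' : (n : ℤ) ^ 2 ≤ (a : ℤ) * r := by exact_mod_cast h10
  have hs' : (a : ℤ) + r ≤ 2 * n := by exact_mod_cast hs
  have hn' : (1 : ℤ) ≤ n := by exact_mod_cast hn
  have h0 : ((a : ℤ) - n) ^ 2 ≤ 0 := by nlinarith [sq_nonneg ((a : ℤ) - r)]
  have h1 : (a : ℤ) - n = 0 :=
    pow_eq_zero_iff (by norm_num : (2 : ℕ) ≠ 0) |>.mp (le_antisymm h0 (sq_nonneg _))
  have ha : (a : ℤ) = n := by linarith
  have hr : (r : ℤ) = n := by nlinarith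
  exact ⟨by exact_mod_cast ha, by exact_mod_cast hr⟩

lemma range_reflect (n : ℕ) :
    (Finset.range n).image (fun i => n - 1 - i) = Finset.range n := by
  ext x
  simp only [Finset.mem_image, Finset.mem_range]
  constructor
  · rintro ⟨i, hi, rfl⟩; omega
  · intro hx; exact ⟨n - 1 - x, by omega, by omega⟩

lemma shift_image (n : ℕ) (b : ZMod L) :
    (Finset.range n).image (fun k : ℕ => b - (k : ZMod L)) =
      (Finset.range n).image (fun i : ℕ => (b - ((n - 1 : ℕ) : ZMod L)) + (i : ZMod L)) := by
  ext x
  simp only [Finset.mem_image, Finset.mem_range]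
  constructor
  · rintro ⟨k, hk, rfl⟩
    refine ⟨n - 1 - k, by omega, ?_⟩
    rw [Nat.cast_sub (by omega : k ≤ n - 1)]
    ring
  · rintro ⟨i, hi, rfl⟩
    refine ⟨n - 1 - i, by omega, ?_⟩
    rw [Nat.cast_sub (by omega : i ≤ n - 1)]
    ring

lemma squareSet_eq_prod (n : ℕ) (x : Site L) :
    squareSet L n x = ((Finset.range n).image fun i : ℕ => x.1 + (i : ZMod L)) ×ˢ
      ((Finset.range n).image fun j : ℕ => x.2 + (j : ZMod L)) := by
  ext ⟨p, q⟩
  simp only [squareSet, Finset.mem_image, Finset.mem_product, Finset.mem_range,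
    Prod.exists]
  constructor
  · rintro ⟨i, j, hm, he⟩
    refine ⟨⟨i, hm.1, ?_⟩, ⟨j, hm.2, ?_⟩⟩
    · simpa using congrArg Prod.fst he
    · simpa using congrArg Prod.snd he
  · rintro ⟨⟨i, hi, hp⟩, ⟨j, hj, hq⟩⟩
    refine ⟨i, j, ⟨hi, hj⟩, ?_⟩
    ext
    · simpa using hp
    · simpa using hq

end MinE

open MinE

/-- for `n ≥ 4` and `L > 2n`, the only sets of `n²` sites with exactly
`2n(n−1)` internal adjacent pairs (i.e. the only minimal-energy configurations)
are the translated squares `Q_x = x + {0,…,n−1}²`. -/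
theorem minimal_energy_unique (n L : ℕ) (hn : 4 ≤ n) (hL : 2 * n < L)
    (S : Finset (Site L)) (hS : S.card = n ^ 2) (hE : torusE L S = 2 * n * (n - 1)) :
    ∃ x : Site L, S = squareSet L n x := by
  haveI : NeZero L := ⟨by omega⟩
  set S' := S.image Prod.swap with hS'def
  set C := S.image Prod.fst with hCdef
  set R := S.image Prod.snd with hRdef
  have hS'card : S'.card = n ^ 2 := by
    rw [hS'def, Finset.card_image_of_injective _ Prod.swap_injective, hS]
  have hE' : hcount S + vcount S = 2 * n * (n - 1) := by
    rw [← torusE_eq (by omega) S, hE]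
  set f := (Finset.univ.filter fun j => (colSet S j).card = L).card with hfdef
  set g := (Finset.univ.filter fun j => (colSet S' j).card = L).card with hgdef
  have K1 : vcount S + C.card ≤ n ^ 2 + f := by
    have := key_ineq S
    rwa [hS] at this
  have K2 : hcount S + R.card ≤ n ^ 2 + g := by
    have h := key_ineq S'
    rw [hS'card, image_fst_swap] at h
    rw [hcount_swap]
    exact h
  have K4 : f * L ≤ n ^ 2 := by
    have := full_mul_le S
    rwa [hS] at this
  have K5 : g * L ≤ n ^ 2 := by
    have := full_mul_le S'
    rwa [hS'card] at this
  have K6 : 1 ≤ f → R.card = L := by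
    intro hf
    obtain ⟨j, hj⟩ := Finset.card_pos.mp (by omega : 0 < (Finset.univ.filter fun j => (colSet S j).card = L).card)
    have := full_col_rows (Finset.mem_filter.mp hj).2
    rw [hRdef, this, Finset.card_univ, ZMod.card]
  have K7 : 1 ≤ g → C.card = L := by
    intro hg
    obtain ⟨j, hj⟩ := Finset.card_pos.mp (by omega : 0 < (Finset.univ.filter fun j => (colSet S' j).card = L).card)
    have := full_col_rows (Finset.mem_filter.mp hj).2
    rw [hS'def, image_snd_swap] at this
    rw [hCdef, this, Finset.card_univ, ZMod.card]
  have K8 : f ≤ C.card := by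
    have := Finset.card_le_card (F_subset_C S)
    rwa [← hCdef, ← hfdef] at this
  have K8' : g ≤ R.card := by
    have := Finset.card_le_card (F_subset_C S')
    rw [image_fst_swap] at this
    rwa [← hRdef, ← hgdef] at this
  have K10 : n ^ 2 ≤ C.card * R.card := by
    have hsub : S ⊆ C ×ˢ R := fun u hu => Finset.mem_product.mpr
      ⟨Finset.mem_image_of_mem _ hu, Finset.mem_image_of_mem _ hu⟩
    calc n ^ 2 = S.card := hS.symm
      _ ≤ (C ×ˢ R).card := Finset.card_le_card hsub
      _ = C.card * R.card := Finset.card_product _ _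
  have E2 : 2 * n * (n - 1) + 2 * n = 2 * n ^ 2 := by
    have h1 : n - 1 + 1 = n := by omega
    calc 2 * n * (n - 1) + 2 * n = 2 * n * ((n - 1) + 1) := by ring
      _ = 2 * n ^ 2 := by rw [h1]; ring
  have hsub : S ⊆ C ×ˢ R := fun u hu => Finset.mem_product.mpr
    ⟨Finset.mem_image_of_mem _ hu, Finset.mem_image_of_mem _ hu⟩
  clear_value S' C R f g
  clear hS'def hCdef hRdef hfdef hgdef
  -- rule out full lines
  have hf0 : f = 0 := by
    by_contra hf
    have hf1 : 1 ≤ f := by omega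
    have hR : R.card = L := K6 hf1
    by_cases hg1 : 1 ≤ g
    · have hC : C.card = L := K7 hg1
      -- 2L ≤ 2n + f + g, f*(2n+1) ≤ n², g*(2n+1) ≤ n², L ≥ 2n+1
      have hfL : f * (2 * n + 1) ≤ n ^ 2 := le_trans (Nat.mul_le_mul_left f (by omega)) K4
      have hgL : g * (2 * n + 1) ≤ n ^ 2 := le_trans (Nat.mul_le_mul_left g (by omega)) K5
      have hsum : 2 * L ≤ 2 * n + f + g := by omega
      have hfg : (f + g) * (2 * n + 1) ≤ 2 * n ^ 2 := by
        rw [add_mul]; omega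
      have hfgL : L + 1 ≤ f + g := by omega
      have : (L + 1) * (2 * n + 1) ≤ 2 * n ^ 2 :=
        le_trans (Nat.mul_le_mul_right _ hfgL) hfg
      have hL2 : (2 * n + 2) * (2 * n + 1) ≤ 2 * n ^ 2 :=
        le_trans (Nat.mul_le_mul_right _ (by omega)) this
      nlinarith
    · have hg0 : g = 0 := by omega
      omega
  have hg0 : g = 0 := by
    by_contra hg
    have hg1 : 1 ≤ g := by omega
    have hC : C.card = L := K7 hg1
    omega
  -- main case
  have hCR2n : C.card + R.card ≤ 2 * n := by omega
  obtain ⟨hCn, hRn⟩ := amgm (by omega) K10 hCR2n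
  have hSCR : S = C ×ˢ R := by
    apply Finset.eq_of_subset_of_card_le hsub
    rw [Finset.card_product, hCn, hRn, hS, pow_two]
  have hCne : C.Nonempty := Finset.card_pos.mp (by omega)
  have hRne : R.Nonempty := Finset.card_pos.mp (by omega)
  have hCnu : C ≠ Finset.univ := by
    intro h
    rw [h, Finset.card_univ, ZMod.card] at hCn
    omega
  have hRnu : R ≠ Finset.univ := by
    intro h
    rw [h, Finset.card_univ, ZMod.card] at hRn
    omega
  have hv : vcount S = n * dcount R := by
    rw [hSCR, vcount_prod, hCn]
  have hh : hcount S = dcount C * n := by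
    rw [hSCR, hcount_prod, hRn]
  have hdC : dcount C + 1 ≤ n := by
    have := dcount_succ_le hCne hCnu
    omega
  have hdR : dcount R + 1 ≤ n := by
    have := dcount_succ_le hRne hRnu
    omega
  have hsumd : dcount C + dcount R = 2 * (n - 1) := by
    have hmul : n * (dcount C + dcount R) = n * (2 * (n - 1)) := by
      have h' : dcount C * n + n * dcount R = 2 * n * (n - 1) := by
        rw [← hh, ← hv]; exact hE'
      calc n * (dcount C + dcount R) = dcount C * n + n * dcount R := by ring
        _ = 2 * n * (n - 1) := h'
        _ = n * (2 * (n - 1)) := by ring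
    exact Nat.eq_of_mul_eq_mul_left (by omega) hmul
  have hdCeq : dcount C + 1 = C.card := by omega
  have hdReq : dcount R + 1 = R.card := by omega
  obtain ⟨b, hb⟩ := interval_of_dcount hCne hdCeq
  obtain ⟨c, hc⟩ := interval_of_dcount hRne hdReq
  rw [hCn] at hb
  rw [hRn] at hc
  refine ⟨(b - ((n - 1 : ℕ) : ZMod L), c - ((n - 1 : ℕ) : ZMod L)), ?_⟩
  rw [hSCR, squareSet_eq_prod]
  have hbeq : C = (Finset.range n).image
      (fun i : ℕ => (b - ((n - 1 : ℕ) : ZMod L)) + (i : ZMod L)) := by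
    rw [hb, shift_image]
  have hceq : R = (Finset.range n).image
      (fun j : ℕ => (c - ((n - 1 : ℕ) : ZMod L)) + (j : ZMod L)) := by
    rw [hc, shift_image]
  rw [hbeq, hceq]
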